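/- For every loopless matroid M on a finite ground set E, the modified indicated chromatic number of M equals the chromatic number of M, i.e., χ_i^mod(M) = χ(M). -/

import Mathlib

open Function

/-- A partial coloring `c` (with `none` meaning "uncolored") of the ground set of the
matroid `M`, using colors from `Fin n`, is proper when for each color `j` the elements
of the ground set colored `j` form an independent set of `M`. -/
def ProperColoring {α : Type*} {n : ℕ} (M : Matroid α) (c : α → Option (Fin n)) : Prop :=
  ∀ j : Fin n, M.Indep {x ∈ M.E | c x = some j}

/-- Coloring one more element strictly decreases the number of uncolored elements. -/
theorem uncolored_update_lt {α β : Type*} [DecidableEq α] {E : Set α} (hE : E.Finite)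
    {c : α → Option β} {e : α} (he : e ∈ E) (hce : c e = none) (j : β) :
    {x ∈ E | Function.update c e (some j) x = none}.ncard < {x ∈ E | c x = none}.ncard := by
  apply Set.ncard_lt_ncard
  · constructor
    · rintro x ⟨hxE, hxc⟩
      refine ⟨hxE, ?_⟩
      rcases eq_or_ne x e with rfl | hne
      · simp [Function.update_self] at hxc
      · rwa [Function.update_of_ne hne] at hxc
    · intro hsub
      have := hsub ⟨he, hce⟩
      simp [Function.update_self] at this
  · exact hE.subset (Set.sep_subset _ _)

/-- Alice wins the modified indicated coloring game on the matroid `M` (with finite ground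
set) with the color set `Fin n`, from the partial coloring `c`; defined by recursion on the
number of uncolored elements: either every element of the ground set is colored, or both of
the following hold: (i) there is an uncolored element `e` such that at least one color can
be assigned to `e` keeping the coloring proper, and for every such color Alice wins from the
extended coloring (Alice indicates, Bob colors); and (ii) for every uncolored element `e`
there is a color whose assignment to `e` keeps the coloring proper and such that Alice wins
from the extended coloring (Bob indicates, Alice colors). -/
def AliceWinsMod {α : Type*} [DecidableEq α] {n : ℕ} (M : Matroid α) (hE : M.E.Finite)
    (c : α → Option (Fin n)) : Prop :=
  (∀ e ∈ M.E, c e ≠ none) ∨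
    ((∃ e, ∃ _ : e ∈ M.E, ∃ _ : c e = none,
        (∃ j : Fin n, ProperColoring M (Function.update c e (some j))) ∧
        ∀ j : Fin n, ProperColoring M (Function.update c e (some j)) →
          AliceWinsMod M hE (Function.update c e (some j))) ∧
      (∀ e, e ∈ M.E → c e = none →
        ∃ j : Fin n, ProperColoring M (Function.update c e (some j)) ∧
          AliceWinsMod M hE (Function.update c e (some j))))
termination_by {x ∈ M.E | c x = none}.ncard
decreasing_by all_goals (apply uncolored_update_lt <;> assumption)

/-- The modified indicated chromatic number `χᵢᵐᵒᵈ(M)`: the least size `n` of a color set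
for which Alice wins the modified indicated coloring game from the everywhere-uncolored
coloring. -/
noncomputable def modifiedIndicatedChromaticNumber {α : Type*} [DecidableEq α] (M : Matroid α)
    (hE : M.E.Finite) : ℕ :=
  sInf {n : ℕ | AliceWinsMod (n := n) M hE (fun _ => none)}

/-- The chromatic number `χ(M)`: the least `n` such that the ground set of `M` is the
union of `n` independent sets of `M`. -/
noncomputable def chromaticNumber {α : Type*} (M : Matroid α) : ℕ :=
  sInf {n : ℕ | ∃ V : Fin n → Set α, (∀ i, M.Indep (V i)) ∧ ⋃ i, V i = M.E}

set_option linter.unusedSectionVars false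

open Set Matroid Function

namespace IndAux

variable {α : Type*} {n : ℕ}

noncomputable def rk (M : Matroid α) (X : Set α) : ℕ := (M.exists_isBasis' X).choose.ncard

lemma rk_eq_ncard {M : Matroid α} {I X : Set α} (hI : M.IsBasis' I X) : rk M X = I.ncard :=
  Matroid.IsBase.ncard_eq_ncard_of_isBase
    (Matroid.isBase_restrict_iff'.2 (M.exists_isBasis' X).choose_spec)
    (Matroid.isBase_restrict_iff'.2 hI)

lemma rk_indep {M : Matroid α} {X : Set α} (h : M.Indep X) : rk M X = X.ncard :=
  rk_eq_ncard h.isBasis_self.isBasis'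

section rkfacts

variable {M : Matroid α} (hE : M.E.Finite)
include hE

lemma ncard_le_rk {I X : Set α} (hI : M.Indep I) (hIX : I ⊆ X) : I.ncard ≤ rk M X := by
  obtain ⟨J, hJ, hIJ⟩ := hI.subset_isBasis'_of_subset hIX
  rw [rk_eq_ncard hJ]
  exact Set.ncard_le_ncard hIJ (hE.subset hJ.indep.subset_ground)

lemma rk_mono {X Y : Set α} (hXY : X ⊆ Y) : rk M X ≤ rk M Y := by
  obtain ⟨I, hI⟩ := M.exists_isBasis' X
  rw [rk_eq_ncard hI]
  exact ncard_le_rk hE hI.indep (hI.subset.trans hXY)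

lemma rk_insert_le (X : Set α) (e : α) : rk M (insert e X) ≤ rk M X + 1 := by
  obtain ⟨I, hI⟩ := M.exists_isBasis' X
  obtain ⟨J, hJ, hIJ⟩ := hI.indep.subset_isBasis'_of_subset (hI.subset.trans (subset_insert e X))
  have hJI : J ⊆ insert e I := by
    intro f hf
    by_contra hfn
    simp only [mem_insert_iff, not_or] at hfn
    have hfX : f ∈ X := by
      rcases hJ.subset hf with h | h
      · exact absurd h hfn.1
      · exact h
    exact hI.insert_not_indep ⟨hfX, hfn.2⟩ (hJ.indep.subset (insert_subset hf hIJ))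
  rw [rk_eq_ncard hJ, rk_eq_ncard hI]
  calc J.ncard ≤ (insert e I).ncard :=
        Set.ncard_le_ncard hJI ((hE.subset hI.indep.subset_ground).insert e)
    _ ≤ I.ncard + 1 := Set.ncard_insert_le e I

lemma indep_of_rk_eq {X : Set α} (hX : X ⊆ M.E) (h : rk M X = X.ncard) : M.Indep X := by
  obtain ⟨I, hI⟩ := M.exists_isBasis' X
  have : I = X := Set.eq_of_subset_of_ncard_le hI.subset
    (by rw [← h, rk_eq_ncard hI]) (hE.subset hX)
  exact this ▸ hI.indep

lemma rk_submod {X Y : Set α} (hX : X ⊆ M.E) (hY : Y ⊆ M.E) :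
    rk M (X ∪ Y) + rk M (X ∩ Y) ≤ rk M X + rk M Y := by
  obtain ⟨I, hI⟩ := M.exists_isBasis (X ∩ Y) ((inter_subset_left).trans hX)
  obtain ⟨J, hJ, hIJ⟩ := hI.indep.subset_isBasis_of_subset
    (hI.subset.trans ((inter_subset_left).trans subset_union_left)) (union_subset hX hY)
  have hJfin : J.Finite := hE.subset hJ.indep.subset_ground
  have hkey : J.ncard + I.ncard ≤ (J ∩ X).ncard + (J ∩ Y).ncard := by
    have hu : (J ∩ X) ∪ (J ∩ Y) = J := by
      rw [← inter_union_distrib_left]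
      exact inter_eq_self_of_subset_left hJ.subset
    have hi : (J ∩ X) ∩ (J ∩ Y) = J ∩ (X ∩ Y) := by
      ext x; simp only [mem_inter_iff]; tauto
    have := Set.ncard_union_add_ncard_inter (J ∩ X) (J ∩ Y)
      (hJfin.inter_of_left X) (hJfin.inter_of_left Y)
    rw [hu, hi] at this
    have hIle : I.ncard ≤ (J ∩ (X ∩ Y)).ncard :=
      Set.ncard_le_ncard (subset_inter hIJ hI.subset) (hJfin.inter_of_left _)
    omega
  have h1 : (J ∩ X).ncard ≤ rk M X := ncard_le_rk hE (hJ.indep.inter_right X) inter_subset_right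
  have h2 : (J ∩ Y).ncard ≤ rk M Y := ncard_le_rk hE (hJ.indep.inter_right Y) inter_subset_right
  rw [rk_eq_ncard hJ.isBasis', rk_eq_ncard hI.isBasis']
  omega

lemma rk_span_mono {X Y : Set α} {e : α} (he : e ∈ M.E) (hY : Y ⊆ M.E) (hXY : X ⊆ Y)
    (h : rk M (insert e X) = rk M X) : rk M (insert e Y) = rk M Y := by
  have hX : X ⊆ M.E := hXY.trans hY
  have hsub := rk_submod hE (insert_subset he hX) hY
  have hu : insert e X ∪ Y = insert e Y := by
    rw [insert_union, union_eq_self_of_subset_left hXY]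
  have h1 : rk M X ≤ rk M (insert e X ∩ Y) := rk_mono hE (subset_inter (subset_insert e X) hXY)
  have h2 : rk M Y ≤ rk M (insert e Y) := rk_mono hE (subset_insert e Y)
  rw [hu, h] at hsub
  omega

end rkfacts

def cls (M : Matroid α) (c : α → Option (Fin n)) (j : Fin n) : Set α :=
  {x ∈ M.E | c x = some j}

def unc (M : Matroid α) (c : α → Option (Fin n)) : Set α :=
  {x ∈ M.E | c x = none}

noncomputable def Rsum (M : Matroid α) (c : α → Option (Fin n)) : ℕ :=
  ∑ j : Fin n, rk M (cls M c j)

noncomputable def Gsum (M : Matroid α) (c : α → Option (Fin n)) (S : Set α) : ℕ :=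
  ∑ j : Fin n, rk M (S ∪ cls M c j)

def Rado (M : Matroid α) (c : α → Option (Fin n)) : Prop :=
  ∀ S ⊆ unc M c, S.ncard + Rsum M c ≤ Gsum M c S

def Tight (M : Matroid α) (c : α → Option (Fin n)) (S : Set α) : Prop :=
  S ⊆ unc M c ∧ Gsum M c S = S.ncard + Rsum M c

def Completable (M : Matroid α) (c : α → Option (Fin n)) : Prop :=
  ∃ d : α → Option (Fin n), ProperColoring M d ∧ (∀ x ∈ M.E, d x ≠ none) ∧
    ∀ x ∈ M.E, c x ≠ none → d x = c x

lemma sum_split (f : Fin n → ℕ) (j : Fin n) :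
    ∑ i, f i = f j + ∑ i ∈ Finset.univ.erase j, f i :=
  (Finset.add_sum_erase _ f (Finset.mem_univ j)).symm

lemma proper_iff {M : Matroid α} {c : α → Option (Fin n)} :
    ProperColoring M c ↔ ∀ j, M.Indep (cls M c j) := Iff.rfl

lemma cls_subset_ground (M : Matroid α) (c : α → Option (Fin n)) (j : Fin n) :
    cls M c j ⊆ M.E := fun _ h => h.1

lemma unc_subset_ground (M : Matroid α) (c : α → Option (Fin n)) :
    unc M c ⊆ M.E := fun _ h => h.1

lemma gsum_empty (M : Matroid α) (c : α → Option (Fin n)) : Gsum M c ∅ = Rsum M c := by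
  unfold Gsum Rsum
  simp

lemma tight_empty {M : Matroid α} {c : α → Option (Fin n)} : Tight M c ∅ :=
  ⟨empty_subset _, by simp [gsum_empty]⟩

section update

variable [DecidableEq α] {M : Matroid α} {c : α → Option (Fin n)} {e : α} {i j : Fin n}

lemma cls_update_self (heE : e ∈ M.E) :
    cls M (Function.update c e (some j)) j = insert e (cls M c j) := by
  ext x
  rcases eq_or_ne x e with rfl | hne
  · simp [cls, heE]
  · simp [cls, Function.update_of_ne hne, hne]

lemma cls_update_ne (hce : c e = none) (hij : i ≠ j) :
    cls M (Function.update c e (some j)) i = cls M c i := by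
  ext x
  rcases eq_or_ne x e with rfl | hne
  · simp [cls, hce, fun h => hij (Option.some_injective _ h).symm, Ne.symm hij]
  · simp [cls, Function.update_of_ne hne]

lemma unc_update :
    unc M (Function.update c e (some j)) = unc M c \ {e} := by
  ext x
  rcases eq_or_ne x e with rfl | hne
  · simp [unc]
  · simp [unc, Function.update_of_ne hne, hne]

end update

section tight

variable {M : Matroid α} {c : α → Option (Fin n)} (hE : M.E.Finite)
include hE

lemma tight_union_inter (hc : Rado M c) {S₁ S₂ : Set α}
    (h1 : Tight M c S₁) (h2 : Tight M c S₂) :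
    Tight M c (S₁ ∪ S₂) ∧ Tight M c (S₁ ∩ S₂) := by
  have hs1E : S₁ ⊆ M.E := h1.1.trans (unc_subset_ground M c)
  have hs2E : S₂ ⊆ M.E := h2.1.trans (unc_subset_ground M c)
  have hsum : Gsum M c (S₁ ∪ S₂) + Gsum M c (S₁ ∩ S₂) ≤ Gsum M c S₁ + Gsum M c S₂ := by
    unfold Gsum
    rw [← Finset.sum_add_distrib, ← Finset.sum_add_distrib]
    apply Finset.sum_le_sum
    intro k _
    have hsub := rk_submod hE (union_subset hs1E (cls_subset_ground M c k))
      (union_subset hs2E (cls_subset_ground M c k))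
    have hu : (S₁ ∪ cls M c k) ∪ (S₂ ∪ cls M c k) = (S₁ ∪ S₂) ∪ cls M c k := by
      ext x; simp only [mem_union]; tauto
    have hi : (S₁ ∪ cls M c k) ∩ (S₂ ∪ cls M c k) = (S₁ ∩ S₂) ∪ cls M c k := by
      ext x; simp only [mem_union, mem_inter_iff]; tauto
    rw [hu, hi] at hsub
    exact hsub
  have hcard : (S₁ ∪ S₂).ncard + (S₁ ∩ S₂).ncard = S₁.ncard + S₂.ncard :=
    Set.ncard_union_add_ncard_inter S₁ S₂ (hE.subset hs1E) (hE.subset hs2E)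
  have hr1 := hc (S₁ ∪ S₂) (union_subset h1.1 h2.1)
  have hr2 := hc (S₁ ∩ S₂) ((inter_subset_left).trans h1.1)
  refine ⟨⟨union_subset h1.1 h2.1, ?_⟩, ⟨(inter_subset_left).trans h1.1, ?_⟩⟩ <;>
    · have e1 := h1.2
      have e2 := h2.2
      omega

end tight

end IndAux

namespace IndAux

open Set Matroid Function

variable {α : Type*} {n : ℕ} [DecidableEq α] {M : Matroid α} {c : α → Option (Fin n)}
  {e : α} {j : Fin n} (hE : M.E.Finite)
include hE

/-- If the Rado condition fails after an admissible coloring of `e` with `j`, there is a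
nonempty tight set `S` avoiding `e` with `e` spanned by `S ∪ cls j`. -/
lemma violation (hc : Rado M c) (heE : e ∈ M.E) (hce : c e = none)
    (hadm : rk M (insert e (cls M c j)) = rk M (cls M c j) + 1)
    (hbad : ¬ Rado M (Function.update c e (some j))) :
    ∃ S, Tight M c S ∧ S ⊆ unc M c \ {e} ∧ S.Nonempty ∧
      rk M (insert e (S ∪ cls M c j)) = rk M (S ∪ cls M c j) := by
  unfold Rado at hbad
  push_neg at hbad
  obtain ⟨S, hSsub, hviol⟩ := hbad
  rw [unc_update] at hSsub
  have heS : e ∉ S := fun h => (hSsub h).2 rfl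
  -- rewrite Rsum of update
  have hR : Rsum M (Function.update c e (some j)) = Rsum M c + 1 := by
    unfold Rsum
    rw [sum_split _ j, sum_split (fun i => rk M (cls M c i)) j, cls_update_self heE, hadm]
    have : ∀ i ∈ Finset.univ.erase j, rk M (cls M (Function.update c e (some j)) i)
        = rk M (cls M c i) := by
      intro i hi
      rw [cls_update_ne hce (Finset.mem_erase.1 hi).1]
    rw [Finset.sum_congr rfl this]
    omega
  have hG : Gsum M (Function.update c e (some j)) S
      = rk M (insert e (S ∪ cls M c j)) + ∑ i ∈ Finset.univ.erase j, rk M (S ∪ cls M c i) := by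
    unfold Gsum
    rw [sum_split _ j, cls_update_self heE]
    have h1 : S ∪ insert e (cls M c j) = insert e (S ∪ cls M c j) := by
      rw [union_insert]
    have : ∀ i ∈ Finset.univ.erase j, rk M (S ∪ cls M (Function.update c e (some j)) i)
        = rk M (S ∪ cls M c i) := by
      intro i hi
      rw [cls_update_ne hce (Finset.mem_erase.1 hi).1]
    rw [Finset.sum_congr rfl this, h1]
  have hrado := hc S (fun x hx => (hSsub hx).1)
  have hGc : Gsum M c S = rk M (S ∪ cls M c j) + ∑ i ∈ Finset.univ.erase j, rk M (S ∪ cls M c i) :=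
    sum_split _ j
  have hmono : rk M (S ∪ cls M c j) ≤ rk M (insert e (S ∪ cls M c j)) :=
    rk_mono hE (subset_insert _ _)
  have hspan : rk M (insert e (S ∪ cls M c j)) = rk M (S ∪ cls M c j) := by omega
  have htight : Tight M c S := ⟨fun x hx => (hSsub hx).1, by omega⟩
  have hSne : S.Nonempty := by
    rcases S.eq_empty_or_nonempty with rfl | h
    · rw [empty_union] at hspan
      omega
    · exact h
  exact ⟨S, htight, hSsub, hSne, hspan⟩

lemma tight_biUnion (hc : Rado M c) {ι : Type*} [DecidableEq ι] (F : Finset ι) (f : ι → Set α)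
    (h : ∀ i ∈ F, Tight M c (f i)) : Tight M c (⋃ i ∈ F, f i) := by
  classical
  induction F using Finset.induction_on with
  | empty => simpa using tight_empty
  | @insert a F' hni ih =>
    rw [Finset.set_biUnion_insert]
    exact (tight_union_inter hE hc (h a (Finset.mem_insert_self a F'))
      (ih (fun i hi => h i (Finset.mem_insert_of_mem hi)))).1

end IndAux

namespace IndAux

open Set Matroid Function

variable {α : Type*} {n : ℕ} [DecidableEq α] {M : Matroid α} (hE : M.E.Finite)
include hE

/-- Key step: from a Rado-condition position with an uncolored element, there is an
admissible color for `e`... more precisely, for any uncolored `e` which fails to have a good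
admissible color we get a contradiction; this gives one good color. -/
lemma exists_good_color {c : α → Option (Fin n)} (hc : Rado M c) {e : α}
    (heu : e ∈ unc M c) :
    ∃ j : Fin n, rk M (insert e (cls M c j)) = rk M (cls M c j) + 1 ∧
      Rado M (Function.update c e (some j)) := by
  classical
  have heE : e ∈ M.E := heu.1
  have hce : c e = none := heu.2
  by_contra hno
  push_neg at hno
  -- for every admissible j, get a violating tight set
  have hviol : ∀ j : Fin n, rk M (insert e (cls M c j)) = rk M (cls M c j) + 1 →
      ∃ S, Tight M c S ∧ S ⊆ unc M c \ {e} ∧ S.Nonempty ∧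
        rk M (insert e (S ∪ cls M c j)) = rk M (S ∪ cls M c j) := by
    intro j hadm
    exact violation hE hc heE hce hadm (hno j hadm)
  choose! S hS using hviol
  set I : Finset (Fin n) :=
    Finset.univ.filter (fun j => rk M (insert e (cls M c j)) = rk M (cls M c j) + 1) with hI
  set T : Set α := ⋃ i ∈ I, S i with hT
  have hmemI : ∀ i, i ∈ I ↔ rk M (insert e (cls M c i)) = rk M (cls M c i) + 1 := by
    intro i; simp [hI]
  have hTtight : Tight M c T :=
    tight_biUnion hE hc I S (fun i hi => (hS i ((hmemI i).1 hi)).1)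
  have hTsub : T ⊆ unc M c \ {e} := by
    apply iUnion₂_subset
    intro i hi
    exact (hS i ((hmemI i).1 hi)).2.1
  have hTE : T ⊆ M.E := fun x hx => ((hTsub hx).1).1
  -- e is spanned by T ∪ cls i for every i
  have hspan : ∀ i : Fin n, rk M (insert e (T ∪ cls M c i)) = rk M (T ∪ cls M c i) := by
    intro i
    have hTclsE : T ∪ cls M c i ⊆ M.E := union_subset hTE (cls_subset_ground M c i)
    by_cases hi : i ∈ I
    · have := (hS i ((hmemI i).1 hi)).2.2.2
      exact rk_span_mono hE heE hTclsE
        (union_subset_union_left _ (subset_biUnion_of_mem (u := S) hi)) this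
    · have h1 : rk M (insert e (cls M c i)) ≤ rk M (cls M c i) + 1 := rk_insert_le hE _ e
      have h2 : rk M (cls M c i) ≤ rk M (insert e (cls M c i)) := rk_mono hE (subset_insert _ _)
      have h3 : rk M (insert e (cls M c i)) = rk M (cls M c i) := by
        rw [hmemI] at hi; omega
      exact rk_span_mono hE heE hTclsE subset_union_right h3
  -- contradiction with Rado at insert e T
  have heT : e ∉ T := fun h => (hTsub h).2 rfl
  have hsub : insert e T ⊆ unc M c := insert_subset heu (fun x hx => (hTsub hx).1)
  have hr := hc (insert e T) hsub
  have hcard : (insert e T).ncard = T.ncard + 1 :=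
    Set.ncard_insert_of_notMem heT (hE.subset hTE)
  have hGeq : Gsum M c (insert e T) = Gsum M c T := by
    unfold Gsum
    apply Finset.sum_congr rfl
    intro i _
    rw [insert_union]
    exact hspan i
  have := hTtight.2
  omega

/-- the hard direction of the matroid-union / Rado theorem. -/
lemma rado_completable :
    ∀ N (c : α → Option (Fin n)), (unc M c).ncard ≤ N → ProperColoring M c → Rado M c →
      Completable M c := by
  intro N
  induction N with
  | zero =>
    intro c hN hp _
    have hzero : unc M c = ∅ := by
      have : (unc M c).Finite := hE.subset (unc_subset_ground M c)
      rw [← Set.ncard_eq_zero this]; omega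
    exact ⟨c, hp, fun x hx hnone => by
      have : x ∈ unc M c := ⟨hx, hnone⟩
      simp [hzero] at this, fun x _ _ => rfl⟩
  | succ N ih =>
    intro c hN hp hc
    rcases (unc M c).eq_empty_or_nonempty with hzero | ⟨e, heu⟩
    · exact ⟨c, hp, fun x hx hnone => by
        have : x ∈ unc M c := ⟨hx, hnone⟩
        simp [hzero] at this, fun x _ _ => rfl⟩
    · obtain ⟨j, hadm, hrado⟩ := exists_good_color hE hc heu
      have heE : e ∈ M.E := heu.1
      have hce : c e = none := heu.2
      -- update is proper
      have hprop : ProperColoring M (Function.update c e (some j)) := by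
        intro i
        rcases eq_or_ne i j with rfl | hij
        · show M.Indep (cls M (Function.update c e (some i)) i)
          rw [cls_update_self heE]
          apply indep_of_rk_eq hE (insert_subset heE (cls_subset_ground M c i))
          have hecls : e ∉ cls M c i := fun h => by simp [cls, hce] at h
          rw [hadm, Set.ncard_insert_of_notMem hecls (hE.subset (cls_subset_ground M c i)),
            rk_indep (show M.Indep (cls M c i) from hp i)]
        · show M.Indep (cls M (Function.update c e (some j)) i)
          rw [cls_update_ne hce hij]
          exact hp i
      -- measure decreases
      have hlt : (unc M (Function.update c e (some j))).ncard < (unc M c).ncard := by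
        rw [unc_update]
        apply Set.ncard_lt_ncard _ (hE.subset (unc_subset_ground M c))
        exact ⟨diff_subset, fun h => ((h heu).2 rfl)⟩
      obtain ⟨d, hd1, hd2, hd3⟩ := ih (Function.update c e (some j)) (by omega) hprop hrado
      refine ⟨d, hd1, hd2, fun x hx hxc => ?_⟩
      have hxne : x ≠ e := fun h => hxc (h ▸ hce)
      have := hd3 x hx (by rwa [Function.update_of_ne hxne])
      rwa [Function.update_of_ne hxne] at this

end IndAux

namespace IndAux

open Set Matroid Function

variable {α : Type*} {n : ℕ} {M : Matroid α} (hE : M.E.Finite)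
include hE

lemma ncard_biUnion_le {ι : Type*} (F : Finset ι) (f : ι → Set α) (hf : ∀ i ∈ F, (f i).Finite) :
    (⋃ i ∈ F, f i).ncard ≤ ∑ i ∈ F, (f i).ncard := by
  classical
  induction F using Finset.induction_on with
  | empty => simp
  | @insert a F' hni ih =>
    rw [Finset.set_biUnion_insert, Finset.sum_insert hni]
    calc (f a ∪ ⋃ i ∈ F', f i).ncard ≤ (f a).ncard + (⋃ i ∈ F', f i).ncard :=
          Set.ncard_union_le _ _
      _ ≤ (f a).ncard + ∑ i ∈ F', (f i).ncard := by
          have := ih (fun i hi => hf i (Finset.mem_insert_of_mem hi))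
          omega

lemma completable_rado {c : α → Option (Fin n)} (hp : ProperColoring M c)
    (hcom : Completable M c) : Rado M c := by
  obtain ⟨d, hd1, hd2, hd3⟩ := hcom
  intro S hS
  have hSE : S ⊆ M.E := hS.trans (unc_subset_ground M c)
  have hSfin : S.Finite := hE.subset hSE
  -- S is covered by the d-classes
  have hcover : S = ⋃ j ∈ (Finset.univ : Finset (Fin n)), S ∩ cls M d j := by
    apply Set.eq_of_subset_of_subset
    · intro x hx
      have hxE : x ∈ M.E := hSE hx
      rcases h : d x with _ | j
      · exact absurd h (hd2 x hxE)
      · simp only [Set.mem_iUnion]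
        exact ⟨j, Finset.mem_univ j, hx, hxE, h⟩
    · intro x hx
      simp only [Set.mem_iUnion] at hx
      obtain ⟨j, _, hj, _⟩ := hx
      exact hj
  have hcard : S.ncard ≤ ∑ j : Fin n, (S ∩ cls M d j).ncard := by
    calc S.ncard = (⋃ j ∈ (Finset.univ : Finset (Fin n)), S ∩ cls M d j).ncard := by
          rw [← hcover]
      _ ≤ ∑ j : Fin n, (S ∩ cls M d j).ncard :=
          ncard_biUnion_le hE _ _ (fun i _ => hSfin.inter_of_left _)
  -- termwise bound
  have hterm : ∀ j : Fin n, (S ∩ cls M d j).ncard + rk M (cls M c j) ≤ rk M (S ∪ cls M c j) := by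
    intro j
    have hccd : cls M c j ⊆ cls M d j := by
      intro x hx
      exact ⟨hx.1, by rw [hd3 x hx.1 (by rw [hx.2]; exact fun h => by cases h)]; exact hx.2⟩
    have hindep : M.Indep ((S ∩ cls M d j) ∪ cls M c j) :=
      (hd1 j).subset (union_subset inter_subset_right hccd)
    have hdisj : Disjoint (S ∩ cls M d j) (cls M c j) := by
      rw [Set.disjoint_left]
      rintro x ⟨hxS, -⟩ hxc
      have : c x = none := (hS hxS).2
      rw [hxc.2] at this
      cases this
    have hcardu : ((S ∩ cls M d j) ∪ cls M c j).ncard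
        = (S ∩ cls M d j).ncard + (cls M c j).ncard :=
      Set.ncard_union_eq hdisj (hSfin.inter_of_left _) (hE.subset (cls_subset_ground M c j))
    have := ncard_le_rk hE hindep
      (union_subset ((inter_subset_left).trans subset_union_left)
        (subset_union_right))
    rw [hcardu] at this
    rw [rk_indep (show M.Indep (cls M c j) from hp j)]
    omega
  unfold Rsum Gsum
  calc S.ncard + ∑ j : Fin n, rk M (cls M c j)
      ≤ ∑ j : Fin n, (S ∩ cls M d j).ncard + ∑ j : Fin n, rk M (cls M c j) := by omega
    _ = ∑ j : Fin n, ((S ∩ cls M d j).ncard + rk M (cls M c j)) := by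
        rw [Finset.sum_add_distrib]
    _ ≤ ∑ j : Fin n, rk M (S ∪ cls M c j) := Finset.sum_le_sum (fun j _ => hterm j)

end IndAux

namespace IndAux

open Set Matroid Function

variable {α : Type*} {n : ℕ} [DecidableEq α] {M : Matroid α} (hE : M.E.Finite)
include hE

/-- Alice's key lemma: there is an uncolored element such that every admissible color for it
preserves the Rado condition. -/
lemma key_lemma {c : α → Option (Fin n)} (hc : Rado M c) (hne : (unc M c).Nonempty) :
    ∃ e ∈ unc M c, ∀ j : Fin n, rk M (insert e (cls M c j)) = rk M (cls M c j) + 1 →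
      Rado M (Function.update c e (some j)) := by
  classical
  by_cases hT : ∃ S, Tight M c S ∧ S.Nonempty
  · -- take a minimum-cardinality nonempty tight set
    obtain ⟨S₀, hS₀, hS₀ne⟩ := hT
    set k := sInf {m | ∃ S, Tight M c S ∧ S.Nonempty ∧ S.ncard = m} with hk
    obtain ⟨T, hTt, hTne, hTk⟩ :=
      Nat.sInf_mem (s := {m | ∃ S, Tight M c S ∧ S.Nonempty ∧ S.ncard = m})
        ⟨S₀.ncard, S₀, hS₀, hS₀ne, rfl⟩
    obtain ⟨e, heT⟩ := hTne
    have heu : e ∈ unc M c := hTt.1 heT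
    refine ⟨e, heu, fun j hadm => ?_⟩
    by_contra hbad
    obtain ⟨S, hSt, hSsub, hSne, hSspan⟩ := violation hE hc heu.1 heu.2 hadm hbad
    have heS : e ∉ S := fun h => (hSsub h).2 rfl
    have hSE : S ⊆ M.E := hSt.1.trans (unc_subset_ground M c)
    have hTE : T ⊆ M.E := hTt.1.trans (unc_subset_ground M c)
    have heE : e ∈ M.E := heu.1
    -- S and T are disjoint
    have hST : S ∩ T = ∅ := by
      by_contra hne'
      have hint := (tight_union_inter hE hc hSt hTt).2
      have hge : k ≤ (S ∩ T).ncard :=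
        Nat.sInf_le ⟨S ∩ T, hint, nonempty_iff_ne_empty.2 hne', rfl⟩
      have hlt : (S ∩ T).ncard < T.ncard := by
        apply Set.ncard_lt_ncard _ (hE.subset hTE)
        rw [Set.ssubset_def]
        exact ⟨inter_subset_right, fun h => heS (h heT).1⟩
      omega
    have hdisj : ∀ x, x ∈ S → x ∈ T → False := by
      intro x h1 h2
      have : x ∈ S ∩ T := ⟨h1, h2⟩
      rw [hST] at this
      exact this
    -- submodular inequality (1)
    have h1 : ∀ i : Fin n, rk M ((S ∪ T) ∪ cls M c i) + rk M (insert e (cls M c i))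
        ≤ rk M (insert e (S ∪ cls M c i)) + rk M (T ∪ cls M c i) := by
      intro i
      have hsub := rk_submod hE
        (X := insert e (S ∪ cls M c i)) (Y := T ∪ cls M c i)
        (insert_subset heE (union_subset hSE (cls_subset_ground M c i)))
        (union_subset hTE (cls_subset_ground M c i))
      have hu : insert e (S ∪ cls M c i) ∪ (T ∪ cls M c i) = (S ∪ T) ∪ cls M c i := by
        ext x
        simp only [Set.mem_insert_iff, Set.mem_union]
        constructor
        · rintro ((rfl | h | h) | (h | h))
          · exact Or.inl (Or.inr heT)
          · exact Or.inl (Or.inl h)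
          · exact Or.inr h
          · exact Or.inl (Or.inr h)
          · exact Or.inr h
        · rintro ((h | h) | h)
          · exact Or.inl (Or.inr (Or.inl h))
          · exact Or.inr (Or.inl h)
          · exact Or.inr (Or.inr h)
      have hi : insert e (S ∪ cls M c i) ∩ (T ∪ cls M c i) = insert e (cls M c i) := by
        ext x
        simp only [Set.mem_insert_iff, Set.mem_union, Set.mem_inter_iff]
        constructor
        · rintro ⟨(rfl | h | h), (h' | h')⟩
          · exact Or.inl rfl
          · exact Or.inl rfl
          · exact (hdisj x h h').elim
          · exact Or.inr h'
          · exact Or.inr h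
          · exact Or.inr h
        · rintro (rfl | h)
          · exact ⟨Or.inl rfl, Or.inl heT⟩
          · exact ⟨Or.inr (Or.inr h), Or.inr h⟩
      rw [hu, hi] at hsub
      exact hsub
    -- submodular inequality (2)
    have h2 : ∀ i : Fin n, rk M (insert e (S ∪ cls M c i)) + rk M (cls M c i)
        ≤ rk M (S ∪ cls M c i) + rk M (insert e (cls M c i)) := by
      intro i
      have hsub := rk_submod hE
        (X := S ∪ cls M c i) (Y := insert e (cls M c i))
        (union_subset hSE (cls_subset_ground M c i))
        (insert_subset heE (cls_subset_ground M c i))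
      have hu : (S ∪ cls M c i) ∪ insert e (cls M c i) = insert e (S ∪ cls M c i) := by
        ext x
        simp only [Set.mem_insert_iff, Set.mem_union]
        tauto
      have hi : (S ∪ cls M c i) ∩ insert e (cls M c i) = cls M c i := by
        ext x
        simp only [Set.mem_insert_iff, Set.mem_union, Set.mem_inter_iff]
        constructor
        · rintro ⟨(h | h), (rfl | h')⟩
          · exact absurd h heS
          · exact h'
          · exact h
          · exact h
        · intro h
          exact ⟨Or.inr h, Or.inr h⟩
      rw [hu, hi] at hsub
      exact hsub
    -- assemble all sums
    have hSTtight : Tight M c (S ∪ T) := (tight_union_inter hE hc hSt hTt).1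
    have hcardST : (S ∪ T).ncard = S.ncard + T.ncard :=
      Set.ncard_union_eq (Set.disjoint_iff_inter_eq_empty.2 hST)
        (hE.subset hSE) (hE.subset hTE)
    have h1sum : Gsum M c (S ∪ T) + ∑ i : Fin n, rk M (insert e (cls M c i))
        ≤ (∑ i : Fin n, rk M (insert e (S ∪ cls M c i))) + Gsum M c T := by
      unfold Gsum
      rw [← Finset.sum_add_distrib, ← Finset.sum_add_distrib]
      exact Finset.sum_le_sum (fun i _ => h1 i)
    have h2sum : (∑ i ∈ Finset.univ.erase j, rk M (insert e (S ∪ cls M c i)))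
          + ∑ i ∈ Finset.univ.erase j, rk M (cls M c i)
        ≤ (∑ i ∈ Finset.univ.erase j, rk M (S ∪ cls M c i))
          + ∑ i ∈ Finset.univ.erase j, rk M (insert e (cls M c i)) := by
      rw [← Finset.sum_add_distrib, ← Finset.sum_add_distrib]
      exact Finset.sum_le_sum (fun i _ => h2 i)
    have hs1 : ∑ i : Fin n, rk M (insert e (cls M c i))
        = rk M (cls M c j) + 1 + ∑ i ∈ Finset.univ.erase j, rk M (insert e (cls M c i)) := by
      rw [sum_split (fun i => rk M (insert e (cls M c i))) j, hadm]
    have hs2 : ∑ i : Fin n, rk M (insert e (S ∪ cls M c i))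
        = rk M (S ∪ cls M c j) + ∑ i ∈ Finset.univ.erase j, rk M (insert e (S ∪ cls M c i)) := by
      rw [sum_split (fun i => rk M (insert e (S ∪ cls M c i))) j, hSspan]
    have hs3 : Gsum M c S
        = rk M (S ∪ cls M c j) + ∑ i ∈ Finset.univ.erase j, rk M (S ∪ cls M c i) :=
      sum_split _ j
    have hs4 : Rsum M c = rk M (cls M c j) + ∑ i ∈ Finset.univ.erase j, rk M (cls M c i) :=
      sum_split _ j
    have ht1 := hSTtight.2
    have ht2 := hTt.2
    have ht3 := hSt.2
    omega
  · -- no nonempty tight set: any uncolored element works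
    obtain ⟨e, heu⟩ := hne
    refine ⟨e, heu, fun j hadm => ?_⟩
    by_contra hbad
    obtain ⟨S, hSt, _, hSne, _⟩ := violation hE hc heu.1 heu.2 hadm hbad
    exact hT ⟨S, hSt, hSne⟩

end IndAux

namespace IndAux

open Set Matroid Function

variable {α : Type*} {n : ℕ} [DecidableEq α] {M : Matroid α}

/-- From a completable coloring, any uncolored element can get its completion color. -/
lemma completion_step {c : α → Option (Fin n)} (hcom : Completable M c) {e : α}
    (heE : e ∈ M.E) (hce : c e = none) :
    ∃ j : Fin n, ProperColoring M (Function.update c e (some j)) ∧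
      Completable M (Function.update c e (some j)) := by
  obtain ⟨d, hd1, hd2, hd3⟩ := hcom
  rcases hde : d e with _ | j
  · exact absurd hde (hd2 e heE)
  refine ⟨j, ?_, d, hd1, hd2, ?_⟩
  · intro i
    apply (hd1 i).subset
    intro x hx
    obtain ⟨hx1, hx2⟩ := hx
    refine ⟨hx1, ?_⟩
    rcases eq_or_ne x e with rfl | hne
    · rw [Function.update_self] at hx2
      rw [hde, hx2]
    · rw [Function.update_of_ne hne] at hx2
      rw [hd3 x hx1 (by rw [hx2]; exact fun h => by cases h)]
      exact hx2
  · intro x hx hxc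
    rcases eq_or_ne x e with rfl | hne
    · rw [Function.update_self, hde]
    · rw [Function.update_of_ne hne] at hxc ⊢
      exact hd3 x hx hxc

lemma rado_iff_completable {c : α → Option (Fin n)} (hE : M.E.Finite)
    (hp : ProperColoring M c) : Rado M c ↔ Completable M c :=
  ⟨fun h => rado_completable hE (unc M c).ncard c le_rfl hp h, completable_rado hE hp⟩

/-- Admissibility in rank terms from independence of the extended class. -/
lemma adm_of_proper_update {c : α → Option (Fin n)} (hE : M.E.Finite)
    (hp : ProperColoring M c) {e : α} (heE : e ∈ M.E) (hce : c e = none) {j : Fin n}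
    (h : ProperColoring M (Function.update c e (some j))) :
    rk M (insert e (cls M c j)) = rk M (cls M c j) + 1 := by
  have hind : M.Indep (insert e (cls M c j)) := by
    have := h j
    rwa [show {x | x ∈ M.E ∧ Function.update c e (some j) x = some j}
        = cls M (Function.update c e (some j)) j from rfl, cls_update_self heE] at this
  have hecls : e ∉ cls M c j := fun h' => by simp [cls, hce] at h'
  rw [rk_indep hind, rk_indep (show M.Indep (cls M c j) from hp j),
    Set.ncard_insert_of_notMem hecls (hE.subset (cls_subset_ground M c j))]

lemma completable_aliceWins (hE : M.E.Finite) :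
    ∀ N (c : α → Option (Fin n)), (unc M c).ncard ≤ N → ProperColoring M c →
      Completable M c → AliceWinsMod M hE c := by
  intro N
  induction N with
  | zero =>
    intro c hN _ _
    rw [AliceWinsMod]
    left
    intro e heE hnone
    have h1 : (unc M c).Finite := hE.subset (unc_subset_ground M c)
    have : unc M c = ∅ := by rw [← Set.ncard_eq_zero h1]; omega
    have : e ∈ (∅ : Set α) := this ▸ (⟨heE, hnone⟩ : e ∈ unc M c)
    exact this
  | succ N ih =>
    intro c hN hp hcom
    rw [AliceWinsMod]
    by_cases h0 : ∀ e ∈ M.E, c e ≠ none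
    · exact Or.inl h0
    push_neg at h0
    obtain ⟨e₀, he₀E, he₀c⟩ := h0
    right
    have hne : (unc M c).Nonempty := ⟨e₀, he₀E, he₀c⟩
    have hrado : Rado M c := completable_rado hE hp hcom
    have hdec : ∀ (e : α) (j : Fin n), e ∈ M.E → c e = none →
        (unc M (Function.update c e (some j))).ncard ≤ N := by
      intro e j heE hce
      have hlt : (unc M (Function.update c e (some j))).ncard < (unc M c).ncard :=
        uncolored_update_lt hE heE hce j
      omega
    constructor
    · -- Alice indicates, Bob colors
      obtain ⟨e, heu, hgood⟩ := key_lemma hE hrado hne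
      obtain ⟨heE, hce⟩ := heu
      obtain ⟨j₀, hj₀p, _⟩ := completion_step hcom heE hce
      refine ⟨e, heE, hce, ⟨j₀, hj₀p⟩, fun j hjp => ?_⟩
      have hadm := adm_of_proper_update hE hp heE hce hjp
      have hrado' := hgood j hadm
      have hcom' := rado_completable hE _ _ le_rfl hjp hrado'
      exact ih _ (hdec e j heE hce) hjp hcom'
    · -- Bob indicates, Alice colors
      intro e heE hce
      obtain ⟨j, hjp, hjcom⟩ := completion_step hcom heE hce
      exact ⟨j, hjp, ih _ (hdec e j heE hce) hjp hjcom⟩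

lemma aliceWins_full (hE : M.E.Finite) :
    ∀ N (c : α → Option (Fin n)), (unc M c).ncard ≤ N → ProperColoring M c →
      AliceWinsMod M hE c → ∃ d : α → Option (Fin n), ProperColoring M d ∧
        ∀ x ∈ M.E, d x ≠ none := by
  intro N
  induction N with
  | zero =>
    intro c hN hp _
    refine ⟨c, hp, fun x hx hnone => ?_⟩
    have h1 : (unc M c).Finite := hE.subset (unc_subset_ground M c)
    have : unc M c = ∅ := by rw [← Set.ncard_eq_zero h1]; omega
    have : x ∈ (∅ : Set α) := this ▸ (⟨hx, hnone⟩ : x ∈ unc M c)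
    exact this
  | succ N ih =>
    intro c hN hp hw
    rw [AliceWinsMod] at hw
    rcases hw with hall | ⟨⟨e, heE, hce, ⟨j, hjp⟩, hwin⟩, _⟩
    · exact ⟨c, hp, hall⟩
    · have hdec : (unc M (Function.update c e (some j))).ncard ≤ N := by
        have hlt : (unc M (Function.update c e (some j))).ncard < (unc M c).ncard :=
          uncolored_update_lt hE heE hce j
        omega
      exact ih _ hdec hjp (hwin j hjp)

end IndAux

namespace IndAux

open Set Matroid Function

variable {α : Type*} {n : ℕ} [DecidableEq α] {M : Matroid α}

lemma proper_none : ProperColoring M (fun _ => (none : Option (Fin n))) := by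
  intro j
  convert M.empty_indep using 1
  ext x
  simp

lemma aliceWins_iff_partition (hE : M.E.Finite) :
    AliceWinsMod (n := n) M hE (fun _ => none) ↔
      ∃ V : Fin n → Set α, (∀ i, M.Indep (V i)) ∧ ⋃ i, V i = M.E := by
  constructor
  · intro hw
    obtain ⟨d, hd1, hd2⟩ := aliceWins_full hE _ _ le_rfl proper_none hw
    refine ⟨fun i => cls M d i, hd1, ?_⟩
    apply Set.eq_of_subset_of_subset
    · exact Set.iUnion_subset (fun i => cls_subset_ground M d i)
    · intro x hx
      rcases h : d x with _ | j
      · exact absurd h (hd2 x hx)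
      · exact Set.mem_iUnion.2 ⟨j, hx, h⟩
  · rintro ⟨V, hV1, hV2⟩
    classical
    apply completable_aliceWins hE _ _ le_rfl proper_none
    refine ⟨fun x => if h : x ∈ M.E then
        some (Classical.choose (Set.mem_iUnion.1 (show x ∈ ⋃ i, V i from hV2.symm ▸ h)))
      else none, ?_, ?_, ?_⟩
    · intro i
      apply (hV1 i).subset
      rintro x ⟨hxE, hx⟩
      beta_reduce at hx
      rw [dif_pos hxE] at hx
      have hspec := Classical.choose_spec (Set.mem_iUnion.1 (show x ∈ ⋃ i, V i from hV2.symm ▸ hxE))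
      rwa [Option.some_injective _ hx] at hspec
    · intro x hx
      beta_reduce
      rw [dif_pos hx]
      exact fun h => by cases h
    · intro x _ hxc
      exact absurd rfl hxc

end IndAux


/-- For every loopless matroid `M` on a finite ground set, `χᵢᵐᵒᵈ(M) = χ(M)`. -/
theorem modifiedIndicatedChromaticNumber_eq_chromaticNumber {α : Type*} [DecidableEq α]
    (M : Matroid α) (hE : M.E.Finite) (hloopless : ∀ e ∈ M.E, M.Indep {e}) :
    modifiedIndicatedChromaticNumber M hE = chromaticNumber M := by
  unfold modifiedIndicatedChromaticNumber chromaticNumber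
  congr 1
  ext n
  simpa using IndAux.aliceWins_iff_partition (n := n) hE
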